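/- In the centrality game with m = 2, if |N_s^{-2}(x)| ≥ 2, then every best response {v,w} of node s satisfies: either both v, w ∈ N_s^-(x), or v ∈ N_s^-(x) and w ∈ N_v^-(x). In particular, best responses are local: they only involve nodes at in-distance at most 2 from s. -/
import Mathlib


open Finset Matrix

/-- Normalized adjacency matrix of the out-degree-2 graph `G(x)` where each node `i`
places out-links to the two nodes of `x i` (entries `1/2` on out-links). -/
noncomputable def R2 {V : Type*} [Fintype V] [DecidableEq V] (x : V → Finset V) :
    Matrix V V ℝ :=
  Matrix.of fun i j => if j ∈ x i then (1 : ℝ) / 2 else 0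

/-- Utility of player `s` in the game `Γ(V, β, η, 2)`: its Bonacich centrality
`((1-β)(I - β R(x)ᵀ)⁻¹ η)_s` in the formed graph. -/
noncomputable def util2 {V : Type*} [Fintype V] [DecidableEq V]
    (β : ℝ) (η : V → ℝ) (x : V → Finset V) (s : V) : ℝ :=
  ((1 - β) • ((1 - β • (R2 x)ᵀ)⁻¹).mulVec η) s

lemma ker_triv {V : Type*} [Fintype V] [DecidableEq V]
    (β : ℝ) (hβ0 : 0 ≤ β) (hβ1 : β < 1) (P : Matrix V V ℝ)
    (hP : ∀ i j, 0 ≤ P i j) (hrow : ∀ i, ∑ j, P i j ≤ 1)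
    (v : V → ℝ) (hv : (1 - β • P).mulVec v = 0) : v = 0 := by
  by_contra hne
  obtain ⟨i1, hi1⟩ := Function.ne_iff.mp hne
  have hne' : (Finset.univ : Finset V).Nonempty := ⟨i1, Finset.mem_univ i1⟩
  obtain ⟨i0, -, hi0⟩ := Finset.exists_max_image Finset.univ (fun i => |v i|) hne'
  have hi0' : ∀ j, |v j| ≤ |v i0| := fun j => hi0 j (Finset.mem_univ j)
  have hpos : 0 < |v i0| := lt_of_lt_of_le (abs_pos.mpr hi1) (hi0' i1)
  have hveq : v i0 = β * ∑ j, P i0 j * v j := by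
    have h := congrFun hv i0
    simp only [Matrix.mulVec, dotProduct, Matrix.sub_apply, Matrix.one_apply,
      Matrix.smul_apply, smul_eq_mul, Pi.zero_apply, sub_mul, ite_mul, one_mul, zero_mul,
      Finset.sum_sub_distrib, Finset.sum_ite_eq, Finset.mem_univ, if_true, mul_assoc] at h
    rw [Finset.mul_sum]
    linarith
  have hbound : |v i0| ≤ β * |v i0| := by
    have h1 : |∑ j, P i0 j * v j| ≤ ∑ j, P i0 j * |v j| := by
      refine (Finset.abs_sum_le_sum_abs _ _).trans ?_
      refine Finset.sum_le_sum fun j _ => ?_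
      rw [abs_mul, abs_of_nonneg (hP i0 j)]
    have h2 : ∑ j, P i0 j * |v j| ≤ ∑ j, P i0 j * |v i0| := by
      refine Finset.sum_le_sum fun j _ => mul_le_mul_of_nonneg_left (hi0' j) (hP i0 j)
    have h3 : ∑ j, P i0 j * |v i0| = (∑ j, P i0 j) * |v i0| := by
      rw [Finset.sum_mul]
    have h4 : (∑ j, P i0 j) * |v i0| ≤ 1 * |v i0| :=
      mul_le_mul_of_nonneg_right (hrow i0) (le_of_lt hpos)
    calc |v i0| = β * |∑ j, P i0 j * v j| := by rw [hveq, abs_mul, abs_of_nonneg hβ0]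
      _ ≤ β * |v i0| := by
          refine mul_le_mul_of_nonneg_left ?_ hβ0
          linarith
  nlinarith

lemma det_unit {V : Type*} [Fintype V] [DecidableEq V]
    (β : ℝ) (hβ0 : 0 ≤ β) (hβ1 : β < 1) (P : Matrix V V ℝ)
    (hP : ∀ i j, 0 ≤ P i j) (hrow : ∀ i, ∑ j, P i j ≤ 1) :
    IsUnit (1 - β • Pᵀ).det := by
  have h : (1 - β • Pᵀ) = (1 - β • P)ᵀ := by
    rw [Matrix.transpose_sub, Matrix.transpose_one, Matrix.transpose_smul]
  rw [h, Matrix.det_transpose, isUnit_iff_ne_zero]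
  intro hdet
  obtain ⟨w, hw0, hw⟩ := Matrix.exists_mulVec_eq_zero_iff.mpr hdet
  exact hw0 (ker_triv β hβ0 hβ1 P hP hrow w hw)

lemma R2_nonneg {V : Type*} [Fintype V] [DecidableEq V] (x : V → Finset V) (i j : V) :
    0 ≤ R2 x i j := by
  unfold R2; simp only [Matrix.of_apply]; split <;> norm_num

lemma R2_rowsum {V : Type*} [Fintype V] [DecidableEq V] (x : V → Finset V)
    (hx : ∀ i, (x i).card ≤ 2) (i : V) : ∑ j, R2 x i j ≤ 1 := by
  unfold R2
  simp only [Matrix.of_apply]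
  rw [Finset.sum_ite_mem, Finset.univ_inter]
  rw [Finset.sum_const]
  have := hx i
  rw [nsmul_eq_mul]
  have : ((x i).card : ℝ) ≤ 2 := by exact_mod_cast hx i
  nlinarith

/-- in `Γ(V,β,η,2)`, if the two-step in-neighborhood of `s` has at least
two elements, then every best response `{v,w}` of `s` satisfies: either both `v` and
`w` are in-neighbors of `s`, or `v` is an in-neighbor of `s` and `w` an in-neighbor
of `v` (locality of the best response). -/
theorem best_response_locality_m2
    {V : Type*} [Fintype V] [DecidableEq V]
    (β : ℝ) (hβ0 : 0 < β) (hβ1 : β < 1)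
    (η : V → ℝ) (hη : ∀ i, 0 < η i) (hηsum : ∑ i, η i = 1)
    (x : V → Finset V) (hx : ∀ i, (x i).card = 2 ∧ i ∉ x i)
    (s : V)
    (hN : 2 ≤ Set.ncard {i : V | i ≠ s ∧ (s ∈ x i ∨ ∃ t, s ∈ x t ∧ t ∈ x i)}) :
    ∀ a : Finset V, a.card = 2 → s ∉ a →
      (∀ b : Finset V, b.card = 2 → s ∉ b →
        util2 β η (Function.update x s b) s ≤ util2 β η (Function.update x s a) s) →
      ∃ v w, v ≠ w ∧ a = {v, w} ∧
        ((s ∈ x v ∧ s ∈ x w) ∨ (s ∈ x v ∧ v ∈ x w)) := by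
  intro a ha2 hsa hbest
  have hβ0' : (0:ℝ) ≤ β := le_of_lt hβ0
  set Q : Matrix V V ℝ := R2 (Function.update x s ∅) with hQdef
  have hQnn : ∀ i j, 0 ≤ Q i j := fun i j => R2_nonneg _ i j
  have hQrow : ∀ i, ∑ j, Q i j ≤ 1 := R2_rowsum _ (by
    intro i
    rcases eq_or_ne i s with rfl | h
    · simp [Function.update_self]
    · rw [Function.update_of_ne h]; exact (hx i).1.le)
  set N : Matrix V V ℝ := 1 - β • Qᵀ with hNdef
  have hNdet : IsUnit N.det := det_unit β hβ0' hβ1 Q hQnn hQrow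
  set g : V → ℝ := fun i => N⁻¹ s i with hgdef
  -- recurrence for g
  have hrec : ∀ i, g i = (if s = i then 1 else 0) + β * ∑ j, Q i j * g j := by
    intro i
    have h := congrFun (congrFun (Matrix.nonsing_inv_mul N hNdet) s) i
    simp only [Matrix.mul_apply, Matrix.one_apply] at h
    have hNji : ∀ j, N j i = (if j = i then 1 else 0) - β * Q i j := by
      intro j
      simp [hNdef, Matrix.sub_apply, Matrix.one_apply, Matrix.smul_apply,
        Matrix.transpose_apply]
    have h2 : ∑ j, g j * ((if j = i then 1 else 0) - β * Q i j)
        = (if s = i then 1 else 0) := by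
      rw [← h]
      exact Finset.sum_congr rfl fun j _ => by rw [hNji j]
    simp only [mul_sub, mul_ite, mul_one, mul_zero, Finset.sum_sub_distrib,
      Finset.sum_ite_eq', Finset.mem_univ, if_true] at h2
    have h3 : ∑ j, g j * (β * Q i j) = β * ∑ j, Q i j * g j := by
      rw [Finset.mul_sum]
      exact Finset.sum_congr rfl fun j _ => by ring
    linarith [h2, h3.symm.le, h3.le]
  have hgs : g s = 1 := by
    have h := hrec s
    have hQs : ∀ j, Q s j = 0 := by
      intro j; simp [hQdef, R2, Function.update_self]
    have hsum0 : ∑ j, Q s j * g j = 0 :=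
      Finset.sum_eq_zero fun j _ => by rw [hQs j, zero_mul]
    rw [hsum0, mul_zero, add_zero, if_pos rfl] at h
    exact h
  have hgrec : ∀ i, i ≠ s → g i = β / 2 * ∑ j ∈ x i, g j := by
    intro i hi
    have hQi : ∀ j, Q i j = if j ∈ x i then (1:ℝ)/2 else 0 := by
      intro j; simp [hQdef, R2, Function.update_of_ne hi]
    have h1 : ∑ j, Q i j * g j = ∑ j ∈ x i, (1:ℝ)/2 * g j := by
      calc ∑ j, Q i j * g j = ∑ j, (if j ∈ x i then (1:ℝ)/2 * g j else 0) := by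
            refine Finset.sum_congr rfl fun j _ => ?_
            rw [hQi j]; split <;> simp
        _ = ∑ j ∈ x i, (1:ℝ)/2 * g j := by
            rw [Finset.sum_ite_mem, Finset.univ_inter]
    rw [hrec i, if_neg (fun h => hi h.symm), h1, ← Finset.mul_sum]
    ring
  -- nonnegativity of g
  have hg0 : ∀ i, 0 ≤ g i := by
    by_contra hcon
    push_neg at hcon
    obtain ⟨i1, hi1⟩ := hcon
    obtain ⟨i0, -, hi0⟩ := Finset.exists_min_image Finset.univ g ⟨s, Finset.mem_univ s⟩
    have hmin : ∀ j, g i0 ≤ g j := fun j => hi0 j (Finset.mem_univ j)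
    have hneg : g i0 < 0 := lt_of_le_of_lt (hmin i1) hi1
    have hi0s : i0 ≠ s := fun h => by rw [h, hgs] at hneg; linarith
    have h := hgrec i0 hi0s
    have hsum : (2:ℝ) * g i0 ≤ ∑ j ∈ x i0, g j := by
      have h2 := Finset.card_nsmul_le_sum (x i0) g (g i0) (fun j _ => hmin j)
      rw [(hx i0).1] at h2
      simpa [nsmul_eq_mul] using h2
    nlinarith
  -- g bounded by 1
  have hg1 : ∀ i, g i ≤ 1 := by
    obtain ⟨i1, -, hi1⟩ := Finset.exists_max_image Finset.univ g ⟨s, Finset.mem_univ s⟩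
    have hmax : ∀ j, g j ≤ g i1 := fun j => hi1 j (Finset.mem_univ j)
    have h1 : g i1 ≤ 1 := by
      rcases eq_or_ne i1 s with rfl | hne
      · rw [hgs]
      · by_contra hgt
        push_neg at hgt
        have h := hgrec i1 hne
        have hsum : ∑ j ∈ x i1, g j ≤ 2 * g i1 := by
          have h2 := Finset.sum_le_card_nsmul (x i1) g (g i1) (fun j _ => hmax j)
          rw [(hx i1).1] at h2
          simpa [nsmul_eq_mul] using h2
        have h2 : (1:ℝ) ≤ g i1 := by
          have := hmax s; rw [hgs] at this; exact this
        nlinarith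
    exact fun i => le_trans (hmax i) h1
  -- positivity on the 2-in-neighborhood
  have hkey1 : ∀ k, k ≠ s → s ∈ x k → β / 2 ≤ g k := by
    intro k hk hsk
    rw [hgrec k hk]
    have h1 : (1:ℝ) ≤ ∑ j ∈ x k, g j := by
      have h2 := Finset.single_le_sum (f := g) (fun j _ => hg0 j) hsk
      rw [hgs] at h2; exact h2
    nlinarith
  have hgpos : ∀ i, i ≠ s → (s ∈ x i ∨ ∃ t, s ∈ x t ∧ t ∈ x i) → 0 < g i := by
    intro i hi hcase
    rcases hcase with hs | ⟨t, hst, hti⟩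
    · exact lt_of_lt_of_le (by positivity) (hkey1 i hi hs)
    · have hts : t ≠ s := fun h => (hx s).2 (h ▸ hst)
      have hgt : β / 2 ≤ g t := hkey1 t hts hst
      rw [hgrec i hi]
      have h1 : β / 2 ≤ ∑ j ∈ x i, g j :=
        le_trans hgt (Finset.single_le_sum (fun j _ => hg0 j) hti)
      nlinarith
  set c : ℝ := ∑ j, g j * η j with hcdef
  have hc : 0 < c := by
    have h1 : g s * η s ≤ c := by
      exact Finset.single_le_sum (fun j _ => mul_nonneg (hg0 j) (hη j).le) (Finset.mem_univ s)
    rw [hgs, one_mul] at h1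
    exact lt_of_lt_of_le (hη s) h1
  -- utility formula
  have key : ∀ b : Finset V, b.card = 2 → s ∉ b →
      util2 β η (Function.update x s b) s
        = (1 - β) * (c / (1 - β * (1/2 * ∑ i ∈ b, g i)))
      ∧ 0 < 1 - β * (1/2 * ∑ i ∈ b, g i) := by
    intro b hb2 hsb
    have hden : 0 < 1 - β * (1/2 * ∑ i ∈ b, g i) := by
      have hSle : ∑ i ∈ b, g i ≤ 2 := by
        have h2 := Finset.sum_le_card_nsmul b g 1 (fun j _ => hg1 j)
        rw [hb2] at h2
        simpa [nsmul_eq_mul] using h2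
      nlinarith
    set xb := Function.update x s b with hxb
    set M : Matrix V V ℝ := 1 - β • (R2 xb)ᵀ with hM
    have hMdet : IsUnit M.det := by
      refine det_unit β hβ0' hβ1 _ (R2_nonneg _) (R2_rowsum _ (fun i => ?_))
      rcases eq_or_ne i s with rfl | h
      · rw [hxb, Function.update_self, hb2]
      · rw [hxb, Function.update_of_ne h]; exact (hx i).1.le
    set y : V → ℝ := M⁻¹.mulVec η with hy
    have hMy : M.mulVec y = η := by
      rw [hy, Matrix.mulVec_mulVec, Matrix.mul_nonsing_inv M hMdet, Matrix.one_mulVec]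
    set r : V → ℝ := fun i => if i ∈ b then (1:ℝ)/2 else 0 with hr
    have hentry : ∀ j i, R2 xb j i
        = Q j i + (if j = s then (if i ∈ b then (1:ℝ)/2 else 0) else 0) := by
      intro j i
      rcases eq_or_ne j s with rfl | hj
      · simp [hxb, hQdef, R2, Function.update_self]
      · simp [hxb, hQdef, R2, Function.update_of_ne hj, hj]
    have hNy : N.mulVec y = η + (β * y s) • r := by
      funext i
      have h1 : (M.mulVec y) i = η i := congrFun hMy i
      have hNM : ∀ j, N i j = M i j + (if j = s then β * r i else 0) := by
        intro j
        have e1 := hentry j i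
        simp only [hNdef, hM, Matrix.sub_apply, Matrix.one_apply, Matrix.smul_apply,
          Matrix.transpose_apply, smul_eq_mul, hr]
        rw [e1]
        rcases eq_or_ne j s with rfl | hj
        · simp only [if_pos rfl, ite_true, if_true]; ring
        · simp only [if_neg hj]; ring
      have h2 : (N.mulVec y) i = (M.mulVec y) i + ∑ j, (if j = s then β * r i * y j else 0) := by
        simp only [Matrix.mulVec, dotProduct]
        rw [← Finset.sum_add_distrib]
        refine Finset.sum_congr rfl fun j _ => ?_
        rw [hNM j]
        split <;> ring
      rw [h2, h1, Finset.sum_ite_eq' Finset.univ s, if_pos (Finset.mem_univ s)]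
      simp only [Pi.add_apply, Pi.smul_apply, smul_eq_mul]
      ring
    have hyN : y = N⁻¹.mulVec η + (β * y s) • N⁻¹.mulVec r := by
      have h0 := congrArg (fun z => N⁻¹.mulVec z) hNy
      simpa only [Matrix.mulVec_mulVec, Matrix.nonsing_inv_mul N hNdet, Matrix.one_mulVec,
        Matrix.mulVec_add, Matrix.mulVec_smul] using h0
    have hts : (N⁻¹.mulVec r) s = 1/2 * ∑ i ∈ b, g i := by
      simp only [Matrix.mulVec, dotProduct, hr, mul_ite, mul_zero]
      rw [Finset.sum_ite_mem, Finset.univ_inter, Finset.mul_sum]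
      exact Finset.sum_congr rfl fun j _ => by rw [hgdef]; ring
    have hcs : (N⁻¹.mulVec η) s = c := by
      simp only [Matrix.mulVec, dotProduct, hcdef, hgdef]
    have hys : y s * (1 - β * (1/2 * ∑ i ∈ b, g i)) = c := by
      have h3 := congrFun hyN s
      simp only [Pi.add_apply, Pi.smul_apply, smul_eq_mul] at h3
      rw [hts, hcs] at h3
      nlinarith [h3]
    have hysval : y s = c / (1 - β * (1/2 * ∑ i ∈ b, g i)) := by
      rw [eq_div_iff hden.ne']
      exact hys
    constructor
    · show ((1 - β) • (M⁻¹.mulVec η)) s = _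
      simp only [Pi.smul_apply, smul_eq_mul]
      rw [show M⁻¹.mulVec η = y from hy.symm] at *
      rw [hysval]
    · exact hden
  -- comparison of sums
  have hcomp : ∀ b : Finset V, b.card = 2 → s ∉ b → ∑ i ∈ b, g i ≤ ∑ i ∈ a, g i := by
    intro b hb2 hsb
    obtain ⟨hub, hdb⟩ := key b hb2 hsb
    obtain ⟨hua, hda⟩ := key a ha2 hsa
    have h := hbest b hb2 hsb
    rw [hub, hua] at h
    have hb1 : (0:ℝ) < 1 - β := by linarith
    have h1 : c / (1 - β * (1/2 * ∑ i ∈ b, g i)) ≤ c / (1 - β * (1/2 * ∑ i ∈ a, g i)) :=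
      le_of_mul_le_mul_left (by nlinarith) hb1
    have h2 := (div_le_div_iff₀ hdb hda).mp h1
    have h3 : (1 - β * (1/2 * ∑ i ∈ a, g i)) ≤ (1 - β * (1/2 * ∑ i ∈ b, g i)) :=
      le_of_mul_le_mul_left (by nlinarith) hc
    nlinarith
  -- extract ordered pair
  obtain ⟨p, q, hpq, hapq⟩ := Finset.card_eq_two.mp ha2
  obtain ⟨v, w, hvw, hA, hgw⟩ : ∃ v w, v ≠ w ∧ a = {v, w} ∧ g w ≤ g v := by
    rcases le_total (g q) (g p) with h | h
    · exact ⟨p, q, hpq, hapq, h⟩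
    · exact ⟨q, p, hpq.symm, by rw [hapq, Finset.pair_comm], h⟩
  have hvmem : v ∈ a := by rw [hA]; exact Finset.mem_insert_self v {w}
  have hwmem : w ∈ a := by rw [hA]; exact Finset.mem_insert_of_mem (Finset.mem_singleton_self w)
  have hvs : v ≠ s := fun h => hsa (h ▸ hvmem)
  have hws : w ≠ s := fun h => hsa (h ▸ hwmem)
  have hSa : ∑ i ∈ a, g i = g v + g w := by rw [hA, Finset.sum_pair hvw]
  -- two positive nodes
  have h1lt : 1 < Set.ncard {i : V | i ≠ s ∧ (s ∈ x i ∨ ∃ t, s ∈ x t ∧ t ∈ x i)} := by omega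
  obtain ⟨i1, i2, hi1, hi2, hi12⟩ := (Set.one_lt_ncard_iff (Set.toFinite _)).mp h1lt
  have hi1s : i1 ≠ s := hi1.1
  have hi2s : i2 ≠ s := hi2.1
  have hp1 : 0 < g i1 := hgpos i1 hi1.1 hi1.2
  have hp2 : 0 < g i2 := hgpos i2 hi2.1 hi2.2
  -- both coordinates positive
  have hgvpos : 0 < g v := by
    by_contra h
    push_neg at h
    have hv0 : g v = 0 := le_antisymm h (hg0 v)
    have hw0 : g w = 0 := le_antisymm (hgw.trans h) (hg0 w)
    have hcb := hcomp {i1, i2} (Finset.card_pair hi12) (by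
      intro hmem
      rcases Finset.mem_insert.mp hmem with h' | h'
      · exact hi1s h'.symm
      · exact hi2s (Finset.mem_singleton.mp h').symm)
    rw [Finset.sum_pair hi12, hSa, hv0, hw0] at hcb
    linarith
  have hgwpos : 0 < g w := by
    by_contra h
    push_neg at h
    have hw0 : g w = 0 := le_antisymm h (hg0 w)
    obtain ⟨i, his, hip, hiv⟩ : ∃ i, i ≠ s ∧ 0 < g i ∧ i ≠ v := by
      rcases eq_or_ne i1 v with rfl | h1
      · exact ⟨i2, hi2s, hp2, fun h' => hi12 h'.symm⟩
      · exact ⟨i1, hi1s, hp1, h1⟩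
    have hcb := hcomp {v, i} (Finset.card_pair (fun h' => hiv h'.symm)) (by
      intro hmem
      rcases Finset.mem_insert.mp hmem with h' | h'
      · exact hvs h'.symm
      · exact his (Finset.mem_singleton.mp h').symm)
    rw [Finset.sum_pair (fun h' => hiv h'.symm), hSa, hw0] at hcb
    linarith
  -- step lemma: non-in-neighbors point to strictly better nodes
  have hmax_step : ∀ e : V, e ≠ s → 0 < g e → s ∉ x e →
      ∃ j, j ∈ x e ∧ g e < g j ∧ j ≠ s := by
    intro e hes hpos hnot
    have hrec' := hgrec e hes
    have hne : (x e).Nonempty := Finset.card_pos.mp (by rw [(hx e).1]; norm_num)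
    obtain ⟨j, hjmem, hjmax⟩ := Finset.exists_max_image (x e) g hne
    have hsum : ∑ i ∈ x e, g i ≤ 2 * g j := by
      have h2 := Finset.sum_le_card_nsmul (x e) g (g j) (fun i hi => hjmax i hi)
      rw [(hx e).1] at h2
      simpa [nsmul_eq_mul] using h2
    have h1 : g e ≤ β * g j := by
      have h3 := mul_le_mul_of_nonneg_left hsum (by linarith : (0:ℝ) ≤ β / 2)
      have heq : β / 2 * (2 * g j) = β * g j := by ring
      linarith
    have hjpos : 0 < g j := by
      by_contra hle
      push_neg at hle
      have : β * g j ≤ 0 := mul_nonpos_of_nonneg_of_nonpos hβ0' hle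
      linarith
    have hlt : g e < g j := lt_of_le_of_lt h1 (mul_lt_of_lt_one_left hjpos hβ1)
    exact ⟨j, hjmem, hlt, fun h' => hnot (h' ▸ hjmem)⟩
  -- v is an in-neighbor of s
  have hv_in : s ∈ x v := by
    by_contra hnot
    obtain ⟨j, hjx, hjlt, hjs⟩ := hmax_step v hvs hgvpos hnot
    have hjw : j ≠ w := fun h' => absurd (h' ▸ hjlt) (not_lt.mpr hgw)
    have hcb := hcomp {j, w} (Finset.card_pair hjw) (by
      intro hmem
      rcases Finset.mem_insert.mp hmem with h' | h'
      · exact hjs h'.symm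
      · exact hws (Finset.mem_singleton.mp h').symm)
    rw [Finset.sum_pair hjw, hSa] at hcb
    linarith
  rcases em (s ∈ x w) with hw_in | hw_not
  · exact ⟨v, w, hvw, hA, Or.inl ⟨hv_in, hw_in⟩⟩
  · obtain ⟨j, hjx, hjlt, hjs⟩ := hmax_step w hws hgwpos hw_not
    have hjv : j = v := by
      by_contra hne
      have hcb := hcomp {v, j} (Finset.card_pair (fun h' => hne h'.symm)) (by
        intro hmem
        rcases Finset.mem_insert.mp hmem with h' | h'
        · exact hvs h'.symm
        · exact hjs (Finset.mem_singleton.mp h').symm)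
      rw [Finset.sum_pair (fun h' => hne h'.symm), hSa] at hcb
      linarith
    exact ⟨v, w, hvw, hA, Or.inr ⟨hv_in, hjv ▸ hjx⟩⟩
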